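/- Let f : ℝ^d → ℝ be convex, differentiable, and L-smooth for some L > 0, and let (θ_t) be gradient descent iterates θ_{t+1} = θ_t − η_t ∇f(θ_t) with step sizes η_t ∈ (0, 1/L]. If Σ_{t=0}^∞ η_t = ∞, then f(θ_t) converges as t → ∞ to inf_{θ ∈ ℝ^d} f(θ) (an element of [−∞, ∞); in particular f(θ_t) → −∞ when the infimum is −∞). -/

import Mathlib

open Finset Filter
open Topology

local notation "⟪" x ", " y "⟫" => @inner ℝ _ _ x y

variable {E : Type*} [NormedAddCommGroup E] [InnerProductSpace ℝ E] [CompleteSpace E]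

lemma gd_line_hasDerivAt (f : E → ℝ) (hdiff : Differentiable ℝ f) (x v : E) (s : ℝ) :
    HasDerivAt (fun s : ℝ => f (x + s • v)) ⟪gradient f (x + s • v), v⟫ s := by
  have h1 : HasDerivAt (fun s : ℝ => x + s • v) v s := by
    simpa using ((hasDerivAt_id s).smul_const v).const_add x
  have h2 := (hdiff (x + s • v)).hasGradientAt.hasFDerivAt
  have := h2.comp_hasDerivAt s h1
  simpa [InnerProductSpace.toDual_apply_apply, Function.comp_def] using this

lemma gd_convex_grad_ineq (f : E → ℝ) (hconv : ConvexOn ℝ Set.univ f)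
    (hdiff : Differentiable ℝ f) (x y : E) :
    f x + ⟪gradient f x, y - x⟫ ≤ f y := by
  have hd := gd_line_hasDerivAt f hdiff x (y - x) 0
  simp only [zero_smul, add_zero] at hd
  have hslope : Tendsto (slope (fun s : ℝ => f (x + s • (y - x))) 0) (𝓝[>] (0:ℝ))
      (𝓝 ⟪gradient f x, y - x⟫) :=
    (hasDerivAt_iff_tendsto_slope.1 hd).mono_left
      (nhdsWithin_mono 0 fun s hs => ne_of_gt hs)
  have hle : ⟪gradient f x, y - x⟫ ≤ f y - f x := by
    refine le_of_tendsto hslope ?_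
    filter_upwards [Ioc_mem_nhdsGT (zero_lt_one)] with s hs
    have hs0 : 0 < s := hs.1
    have hs1 : s ≤ 1 := hs.2
    have hc := hconv.2 (Set.mem_univ x) (Set.mem_univ y) (by linarith : (0:ℝ) ≤ 1 - s)
      (le_of_lt hs0) (by ring)
    have hx : (1 - s) • x + s • y = x + s • (y - x) := by
      simp [smul_sub, sub_smul]; abel
    rw [hx] at hc
    have : slope (fun s : ℝ => f (x + s • (y - x))) 0 s
        = (f (x + s • (y - x)) - f x) / s := by
      rw [slope_def_field]; simp
    simp only [smul_eq_mul] at hc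
    rw [this, div_le_iff₀ hs0]
    linarith
  linarith

lemma gd_descent (f : E → ℝ) (L : ℝ) (hdiff : Differentiable ℝ f)
    (hsmooth : ∀ x y : E, ‖gradient f x - gradient f y‖ ≤ L * ‖x - y‖) (x y : E) :
    f y ≤ f x + ⟪gradient f x, y - x⟫ + L / 2 * ‖y - x‖ ^ 2 := by
  set v := y - x with hv
  set g0 : ℝ := ⟪gradient f x, v⟫ with hg0
  set ψ : ℝ → ℝ := fun s => f (x + s • v) - s * g0 - (L / 2 * ‖v‖ ^ 2) * s ^ 2 with hψ
  have hψd : ∀ s : ℝ, HasDerivAt ψ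
      (⟪gradient f (x + s • v), v⟫ - g0 - (L / 2 * ‖v‖ ^ 2) * (2 * s)) s := by
    intro s
    have h1 := gd_line_hasDerivAt f hdiff x v s
    have h2 : HasDerivAt (fun s : ℝ => s * g0) g0 s := hasDerivAt_mul_const g0
    have h3 : HasDerivAt (fun s : ℝ => (L / 2 * ‖v‖ ^ 2) * s ^ 2)
        ((L / 2 * ‖v‖ ^ 2) * (2 * s)) s := by
      have := (hasDerivAt_pow 2 s).const_mul (L / 2 * ‖v‖ ^ 2)
      simpa [mul_comm] using this
    exact (h1.sub h2).sub h3
  have hmono : AntitoneOn ψ (Set.Icc (0:ℝ) 1) := by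
    refine antitoneOn_of_deriv_nonpos (convex_Icc 0 1)
      (fun s _ => ((hψd s).differentiableAt).continuousAt.continuousWithinAt)
      (fun s _ => ((hψd s).differentiableAt).differentiableWithinAt) ?_
    intro s hs
    rw [interior_Icc] at hs
    rw [(hψd s).deriv]
    have hCS : ⟪gradient f (x + s • v) - gradient f x, v⟫
        ≤ ‖gradient f (x + s • v) - gradient f x‖ * ‖v‖ := real_inner_le_norm _ _
    have hsm := hsmooth (x + s • v) x
    have hnn : ‖gradient f (x + s • v) - gradient f x‖ * ‖v‖ ≤ L * (s * ‖v‖) * ‖v‖ := by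
      apply mul_le_mul_of_nonneg_right _ (norm_nonneg v)
      calc ‖gradient f (x + s • v) - gradient f x‖ ≤ L * ‖x + s • v - x‖ := hsm
        _ = L * (s * ‖v‖) := by
            rw [add_sub_cancel_left, norm_smul, Real.norm_eq_abs, abs_of_pos hs.1]
    have hinner : ⟪gradient f (x + s • v) - gradient f x, v⟫
        = ⟪gradient f (x + s • v), v⟫ - g0 := by rw [inner_sub_left]
    nlinarith [hinner ▸ (hCS.trans hnn)]
  have h01 := hmono (Set.left_mem_Icc.2 zero_le_one) (Set.right_mem_Icc.2 zero_le_one)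
    zero_le_one
  have hψ0 : ψ 0 = f x := by simp [hψ]
  have hψ1 : ψ 1 = f y - g0 - L / 2 * ‖v‖ ^ 2 := by simp [hψ, hv]
  rw [hψ0, hψ1] at h01
  linarith

/-- **Asymptotic training loss of gradient descent.**
For convex, differentiable, `L`-smooth `f` and gradient descent iterates with step sizes
`η t ∈ (0, 1/L]` satisfying `Σ η t = ∞`, the values `f (θ t)` converge (in the extended
reals, so that the case `inf f = -∞` is included) to `⨅ θ, f θ`. -/
theorem gd_asymptotic_training_loss {d : ℕ} (f : EuclideanSpace ℝ (Fin d) → ℝ)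
    (L : ℝ) (hL : 0 < L)
    (hconv : ConvexOn ℝ Set.univ f) (hdiff : Differentiable ℝ f)
    (hsmooth : ∀ x y : EuclideanSpace ℝ (Fin d),
      ‖gradient f x - gradient f y‖ ≤ L * ‖x - y‖)
    (η : ℕ → ℝ) (hη : ∀ t, 0 < η t ∧ η t ≤ 1 / L)
    (θ : ℕ → EuclideanSpace ℝ (Fin d))
    (hupd : ∀ t, θ (t + 1) = θ t - η t • gradient f (θ t))
    (hdiv : Tendsto (fun T => ∑ t ∈ Finset.range T, η t) atTop atTop) :
    Tendsto (fun t => (f (θ t) : EReal)) atTop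
      (nhds (⨅ x : EuclideanSpace ℝ (Fin d), (f x : EReal))) := by
  have hηL : ∀ t, η t * L ≤ 1 := fun t => by
    have := (hη t).2
    rw [le_div_iff₀ hL] at this
    linarith
  -- Step 1 : sufficient decrease
  have step1 : ∀ t, f (θ (t + 1)) ≤ f (θ t) - η t / 2 * ‖gradient f (θ t)‖ ^ 2 := by
    intro t
    have hd := gd_descent f L hdiff hsmooth (θ t) (θ (t + 1))
    have hsub : θ (t + 1) - θ t = -(η t • gradient f (θ t)) := by
      rw [hupd t]; abel_nf
    rw [hsub] at hd
    have hinner : ⟪gradient f (θ t), -(η t • gradient f (θ t))⟫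
        = -(η t * ‖gradient f (θ t)‖ ^ 2) := by
      rw [inner_neg_right, real_inner_smul_right, real_inner_self_eq_norm_sq]
    have hnorm : ‖-(η t • gradient f (θ t))‖ ^ 2 = η t ^ 2 * ‖gradient f (θ t)‖ ^ 2 := by
      rw [norm_neg, norm_smul, mul_pow, Real.norm_eq_abs, sq_abs]
    rw [hinner, hnorm] at hd
    have h1 := (hη t).1
    nlinarith [sq_nonneg ‖gradient f (θ t)‖, hηL t]
  -- Step 2 : monotonicity
  have step2 : ∀ t, f (θ (t + 1)) ≤ f (θ t) := by
    intro t
    have := step1 t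
    nlinarith [sq_nonneg ‖gradient f (θ t)‖, (hη t).1]
  -- Step 3 : distance decrease
  have step3 : ∀ (t : ℕ) (x : EuclideanSpace ℝ (Fin d)),
      ‖θ (t + 1) - x‖ ^ 2 ≤ ‖θ t - x‖ ^ 2 - 2 * η t * (f (θ (t + 1)) - f x) := by
    intro t x
    have hsub : θ (t + 1) - x = (θ t - x) - η t • gradient f (θ t) := by
      rw [hupd t]; abel
    rw [hsub, norm_sub_sq_real]
    have hinner : ⟪θ t - x, η t • gradient f (θ t)⟫
        = η t * ⟪gradient f (θ t), θ t - x⟫ := by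
      rw [real_inner_smul_right, real_inner_comm]
    have hnorm : ‖η t • gradient f (θ t)‖ ^ 2 = η t ^ 2 * ‖gradient f (θ t)‖ ^ 2 := by
      rw [norm_smul, mul_pow, Real.norm_eq_abs, sq_abs]
    rw [hinner, hnorm]
    have hcv := gd_convex_grad_ineq f hconv hdiff (θ t) x
    have hcvi : ⟪gradient f (θ t), x - θ t⟫ = -⟪gradient f (θ t), θ t - x⟫ := by
      rw [← inner_neg_right]; congr 1; abel
    rw [hcvi] at hcv
    have h1 := step1 t
    have h2 := (hη t).1
    nlinarith [sq_nonneg ‖gradient f (θ t)‖]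
  -- Step 4 : telescoping
  have step4 : ∀ (x : EuclideanSpace ℝ (Fin d)) (c : ℝ), (∀ t, c ≤ f (θ (t + 1))) →
      ∀ T, ‖θ T - x‖ ^ 2 ≤ ‖θ 0 - x‖ ^ 2 - 2 * (c - f x) * ∑ t ∈ Finset.range T, η t := by
    intro x c hc T
    induction T with
    | zero => simp
    | succ T ih =>
      have h3 := step3 T x
      have hcT := hc T
      have hηT := (hη T).1
      rw [Finset.sum_range_succ]
      nlinarith
  -- Limit of a monotone sequence
  have hmono : Antitone (fun t => (f (θ t) : EReal)) := by
    apply antitone_nat_of_succ_le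
    intro t
    exact EReal.coe_le_coe_iff.2 (step2 t)
  have hlim : Tendsto (fun t => (f (θ t) : EReal)) atTop
      (nhds (⨅ t, (f (θ t) : EReal))) := tendsto_atTop_iInf hmono
  have hkey : (⨅ t, (f (θ t) : EReal)) = ⨅ x, (f x : EReal) := by
    apply le_antisymm
    · refine le_iInf fun x => ?_
      by_contra hlt
      push_neg at hlt
      set A : EReal := ⨅ t, (f (θ t) : EReal) with hA
      have hAtop : A ≠ ⊤ := by
        have h0 : A ≤ (f (θ 0) : EReal) := iInf_le _ 0
        exact (h0.trans_lt (EReal.coe_lt_top _)).ne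
      have hAbot : A ≠ ⊥ := ((EReal.bot_lt_coe (f x)).trans hlt).ne'
      obtain ⟨a, ha⟩ : ∃ a : ℝ, A = (a : EReal) := ⟨A.toReal, (EReal.coe_toReal hAtop hAbot).symm⟩
      rw [ha] at hlt
      have hfa : f x < a := EReal.coe_lt_coe_iff.1 hlt
      have hlb : ∀ t, a ≤ f (θ t) := fun t =>
        EReal.coe_le_coe_iff.1 (ha ▸ iInf_le (fun t => (f (θ t) : EReal)) t)
      have h4 := step4 x a (fun t => hlb (t + 1))
      set ε := a - f x with hε
      have hεpos : 0 < ε := by simp [hε]; linarith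
      obtain ⟨T, hT⟩ := (hdiv.eventually
        (eventually_ge_atTop (‖θ 0 - x‖ ^ 2 / (2 * ε) + 1))).exists
      have := h4 T
      have hsq := sq_nonneg ‖θ T - x‖
      have h2ε : 0 < 2 * ε := by linarith
      have h5 : ‖θ 0 - x‖ ^ 2 / (2 * ε) ≤ (∑ t ∈ Finset.range T, η t) - 1 := by linarith
      rw [div_le_iff₀ h2ε] at h5
      nlinarith
    · exact le_iInf fun t => iInf_le _ (θ t)
  rwa [hkey] at hlim
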